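/- Let X be a probability space, n a positive integer, and f ∈ L^∞(X^n) with generalized Walsh expansion f = Σ_{S ⊆ [n]} F_S. Then for every S ⊆ [n], ‖F_S‖_∞ ≤ 2^{|S|} ‖f‖_∞. -/

import Mathlib

open MeasureTheory Function

section Aux

variable {Ω : Type*} [MeasurableSpace Ω] (μ : Measure Ω) [IsProbabilityMeasure μ] {n : ℕ}

theorem upd_measurable (i : Fin n) :
    Measurable (fun p : (Fin n → Ω) × Ω => Function.update p.1 i p.2) := by
  apply measurable_pi_lambda
  intro j
  rcases eq_or_ne j i with rfl | hj
  · simpa only [Function.update_self] using measurable_snd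
  · simp only [Function.update_of_ne hj]
    exact (measurable_pi_apply j).comp measurable_fst

theorem map_update (i : Fin n) :
    Measure.map (fun p : (Fin n → Ω) × Ω => Function.update p.1 i p.2)
      ((Measure.pi fun _ : Fin n => μ).prod μ) = Measure.pi fun _ : Fin n => μ := by
  refine (Measure.pi_eq fun s hs => ?_).symm
  rw [Measure.map_apply (upd_measurable i) (MeasurableSet.univ_pi hs)]
  have hpre : (fun p : (Fin n → Ω) × Ω => Function.update p.1 i p.2) ⁻¹' Set.pi Set.univ s
      = (Set.pi Set.univ (Function.update s i Set.univ)) ×ˢ (s i) := by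
    ext ⟨x, t⟩
    simp only [Set.mem_preimage, Set.mem_pi, Set.mem_univ, forall_true_left, Set.mem_prod]
    constructor
    · intro h
      refine ⟨fun j => ?_, by simpa [Function.update_self] using h i⟩
      rcases eq_or_ne j i with rfl | hj
      · simp [Function.update_self]
      · simpa [Function.update_of_ne hj] using h j
    · rintro ⟨h1, h2⟩ j
      rcases eq_or_ne j i with rfl | hj
      · simpa [Function.update_self] using h2
      · simpa [Function.update_of_ne hj] using h1 j
  rw [hpre, Measure.prod_prod, Measure.pi_pi]
  have hupd : ∀ j, μ (Function.update s i Set.univ j)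
      = Function.update (fun j => μ (s j)) i (μ Set.univ) j :=
    fun j => Function.apply_update (fun _ t => μ t) s i Set.univ j
  simp_rw [hupd]
  rw [Finset.prod_update_of_mem (Finset.mem_univ i), measure_univ, one_mul,
    ← Finset.mul_prod_erase Finset.univ _ (Finset.mem_univ i), mul_comm, Finset.erase_eq]

theorem ae_update (i : Fin n) {p : (Fin n → Ω) → Prop}
    (h : ∀ᵐ y ∂(Measure.pi fun _ : Fin n => μ), p y) :
    ∀ᵐ x ∂(Measure.pi fun _ : Fin n => μ), ∀ᵐ t ∂μ, p (Function.update x i t) := by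
  have h2 : ∀ᵐ q ∂((Measure.pi fun _ : Fin n => μ).prod μ), p (Function.update q.1 i q.2) := by
    apply ae_of_ae_map (upd_measurable (Ω := Ω) i).aemeasurable
    rw [map_update]; exact h
  exact Measure.ae_ae_of_ae_prod h2

/-- Integrate out the `i`-th coordinate. -/
noncomputable def Eop (μ : Measure Ω) {n : ℕ} (i : Fin n) (g : (Fin n → Ω) → ℂ) :
    (Fin n → Ω) → ℂ :=
  fun x => ∫ t, g (Function.update x i t) ∂μ

theorem Eop_congr (i : Fin n) {g h : (Fin n → Ω) → ℂ}
    (hgh : g =ᵐ[Measure.pi fun _ : Fin n => μ] h) :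
    Eop μ i g =ᵐ[Measure.pi fun _ : Fin n => μ] Eop μ i h := by
  filter_upwards [ae_update μ i hgh] with x hx
  exact integral_congr_ae hx

theorem Eop_norm_le (i : Fin n) {g : (Fin n → Ω) → ℂ} {C : ℝ}
    (hg : ∀ᵐ x ∂(Measure.pi fun _ : Fin n => μ), ‖g x‖ ≤ C) :
    ∀ᵐ x ∂(Measure.pi fun _ : Fin n => μ), ‖Eop μ i g x‖ ≤ C := by
  filter_upwards [ae_update μ i hg] with x hx
  calc ‖Eop μ i g x‖ ≤ ∫ _, C ∂μ := norm_integral_le_of_norm_le (integrable_const C) hx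
  _ = C := by simp

theorem slice_integrable (i : Fin n) {g : (Fin n → Ω) → ℂ}
    (hg : Integrable g (Measure.pi fun _ : Fin n => μ)) :
    ∀ᵐ x ∂(Measure.pi fun _ : Fin n => μ),
      Integrable (fun t => g (Function.update x i t)) μ := by
  have h1 : Integrable (fun q : (Fin n → Ω) × Ω => g (Function.update q.1 i q.2))
      ((Measure.pi fun _ : Fin n => μ).prod μ) := by
    rw [← map_update μ i] at hg
    exact (integrable_map_measure hg.aestronglyMeasurable
      (upd_measurable (Ω := Ω) i).aemeasurable).mp hg
  exact h1.prod_right_ae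

/-- Apply, for each index `i` in the list, the operator `I - E_i` if `i ∈ S`
and `E_i` otherwise. -/
noncomputable def proc (μ : Measure Ω) {n : ℕ} (S : Finset (Fin n)) :
    List (Fin n) → ((Fin n → Ω) → ℂ) → ((Fin n → Ω) → ℂ)
  | [] => fun g => g
  | i :: l => fun g =>
      if i ∈ S then proc μ S l g - Eop μ i (proc μ S l g) else Eop μ i (proc μ S l g)

theorem proc_congr (S : Finset (Fin n)) (l : List (Fin n)) {g h : (Fin n → Ω) → ℂ}
    (hgh : g =ᵐ[Measure.pi fun _ : Fin n => μ] h) :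
    proc μ S l g =ᵐ[Measure.pi fun _ : Fin n => μ] proc μ S l h := by
  induction l with
  | nil => exact hgh
  | cons i l ih =>
    simp only [proc]
    split_ifs with hi
    · exact ih.sub (Eop_congr μ i ih)
    · exact Eop_congr μ i ih

theorem proc_norm (S : Finset (Fin n)) (l : List (Fin n)) {g : (Fin n → Ω) → ℂ} {C : ℝ}
    (hg : ∀ᵐ x ∂(Measure.pi fun _ : Fin n => μ), ‖g x‖ ≤ C) :
    ∀ᵐ x ∂(Measure.pi fun _ : Fin n => μ),
      ‖proc μ S l g x‖ ≤ 2 ^ (l.filter (· ∈ S)).length * C := by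
  induction l with
  | nil => simpa [proc] using hg
  | cons i l ih =>
    simp only [proc]
    by_cases hi : i ∈ S
    · simp only [hi, if_true, List.filter_cons, decide_eq_true_eq, if_pos hi]
      filter_upwards [ih, Eop_norm_le μ i ih] with x h1 h2
      calc ‖(proc μ S l g - Eop μ i (proc μ S l g)) x‖
          = ‖proc μ S l g x - Eop μ i (proc μ S l g) x‖ := rfl
      _ ≤ ‖proc μ S l g x‖ + ‖Eop μ i (proc μ S l g) x‖ := norm_sub_le _ _
      _ ≤ 2 ^ (l.filter (· ∈ S)).length * C + 2 ^ (l.filter (· ∈ S)).length * C :=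
        add_le_add h1 h2
      _ = 2 ^ (l.filter (· ∈ S)).length.succ * C := by rw [pow_succ]; ring
      _ = 2 ^ (List.length (i :: l.filter (· ∈ S))) * C := by simp
    · simp only [hi, if_false, List.filter_cons, decide_eq_true_eq, if_neg hi]
      exact Eop_norm_le μ i ih

theorem Eop_sum (i : Fin n) (F : Finset (Fin n) → ((Fin n → Ω) → ℂ))
    (hFint : ∀ S', Integrable (F S') (Measure.pi fun _ : Fin n => μ))
    (A : Finset (Finset (Fin n))) :
    Eop μ i (fun x => ∑ S' ∈ A, F S' x)
      =ᵐ[Measure.pi fun _ : Fin n => μ] fun x => ∑ S' ∈ A, Eop μ i (F S') x := by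
  have h : ∀ᵐ x ∂(Measure.pi fun _ : Fin n => μ),
      ∀ S' ∈ A, Integrable (fun t => F S' (Function.update x i t)) μ := by
    rw [Filter.eventually_all_finset]
    intro S' _
    exact slice_integrable μ i (hFint S')
  filter_upwards [h] with x hx
  simpa [Eop] using integral_finset_sum A (fun S' hS' => hx S' hS')

end Aux

/-- If `f = Σ_{S ⊆ [n]} F_S` is the generalized Walsh expansion of `f ∈ L^∞(Xⁿ)`, then
`‖F_S‖_∞ ≤ 2^{|S|} ‖f‖_∞` for every `S ⊆ [n]`. -/
theorem walsh_linfty_bound {Ω : Type*} [MeasurableSpace Ω] (μ : Measure Ω)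
    [IsProbabilityMeasure μ] (n : ℕ) (hn : 0 < n) (f : (Fin n → Ω) → ℂ)
    (hf : MemLp f 2 (Measure.pi fun _ : Fin n => μ))
    (F : Finset (Fin n) → ((Fin n → Ω) → ℂ))
    (hF2 : ∀ S, MemLp (F S) 2 (Measure.pi fun _ : Fin n => μ))
    (hFdep : ∀ S : Finset (Fin n), ∀ x y : Fin n → Ω, (∀ i ∈ S, x i = y i) → F S x = F S y)
    (hFzero : ∀ S : Finset (Fin n), ∀ i ∈ S, ∀ᵐ x ∂(Measure.pi fun _ : Fin n => μ),
      ∫ t, F S (Function.update x i t) ∂μ = 0)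
    (hsum : ∀ᵐ x ∂(Measure.pi fun _ : Fin n => μ), f x = ∑ S : Finset (Fin n), F S x)
    (S : Finset (Fin n)) :
    eLpNorm (F S) ⊤ (Measure.pi fun _ : Fin n => μ) ≤
      2 ^ S.card * eLpNorm f ⊤ (Measure.pi fun _ : Fin n => μ) := by
  classical
  have hFint : ∀ S', Integrable (F S') (Measure.pi fun _ : Fin n => μ) :=
    fun S' => (hF2 S').integrable (by norm_num)
  -- main induction: applying the operators over a list `l` produces the sum of `F S'`
  -- over those `S'` agreeing with `S` on the elements of `l`.
  have key : ∀ l : List (Fin n),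
      proc μ S l f =ᵐ[Measure.pi fun _ : Fin n => μ]
        fun x => ∑ S' ∈ Finset.univ.filter
          (fun S' : Finset (Fin n) => ∀ i ∈ l, (i ∈ S' ↔ i ∈ S)), F S' x := by
    intro l
    induction l with
    | nil => simp [proc]; exact hsum
    | cons i l ih =>
      set A := Finset.univ.filter
        (fun S' : Finset (Fin n) => ∀ j ∈ l, (j ∈ S' ↔ j ∈ S)) with hA
      have hEsum : Eop μ i (proc μ S l f) =ᵐ[Measure.pi fun _ : Fin n => μ]
          fun x => ∑ S' ∈ A.filter (fun S' => i ∉ S'), F S' x := by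
        have e1 := Eop_congr μ i ih
        have e2 := Eop_sum μ i F hFint A
        have e3 : (fun x => ∑ S' ∈ A, Eop μ i (F S') x)
            =ᵐ[Measure.pi fun _ : Fin n => μ]
            fun x => ∑ S' ∈ A.filter (fun S' => i ∉ S'), F S' x := by
          have hz : ∀ᵐ x ∂(Measure.pi fun _ : Fin n => μ),
              ∀ S' ∈ A.filter (fun S' => i ∈ S'), Eop μ i (F S') x = 0 := by
            rw [Filter.eventually_all_finset]
            intro S' hS'
            exact hFzero S' i (Finset.mem_filter.mp hS').2
          filter_upwards [hz] with x hx
          rw [← Finset.sum_filter_add_sum_filter_not A (fun S' => i ∈ S')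
            (fun S' => Eop μ i (F S') x), Finset.sum_eq_zero hx, zero_add]
          refine Finset.sum_congr rfl fun S' hS' => ?_
          have hiS' : i ∉ S' := (Finset.mem_filter.mp hS').2
          show (∫ t, F S' (Function.update x i t) ∂μ) = F S' x
          have hconst : ∀ t, F S' (Function.update x i t) = F S' x := fun t =>
            hFdep S' _ x (fun j hj => Function.update_of_ne (by rintro rfl; exact hiS' hj) _ _)
          simp [hconst]
        exact (e1.trans e2).trans e3
      have hfilter_eq : Finset.univ.filter
            (fun S' : Finset (Fin n) => ∀ j ∈ i :: l, (j ∈ S' ↔ j ∈ S))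
          = A.filter (fun S' => (i ∈ S' ↔ i ∈ S)) := by
        rw [hA, Finset.filter_filter]
        apply Finset.filter_congr
        intro S' _
        simp [List.forall_mem_cons, and_comm]
      by_cases hi : i ∈ S
      · have hproc : proc μ S (i :: l) f
            = proc μ S l f - Eop μ i (proc μ S l f) := by simp [proc, hi]
        rw [hproc, hfilter_eq]
        have crux : ((fun x => ∑ S' ∈ A, F S' x)
              - fun x => ∑ S' ∈ A.filter (fun S' => i ∉ S'), F S' x)
            = fun x => ∑ S' ∈ A.filter (fun S' => (i ∈ S' ↔ i ∈ S)), F S' x := by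
          funext x
          have hc : A.filter (fun S' => (i ∈ S' ↔ i ∈ S))
              = A.filter (fun S' => i ∈ S') :=
            Finset.filter_congr (by intro S' _; simp [hi])
          have hsplit := Finset.sum_filter_add_sum_filter_not A
            (fun S' => i ∈ S') (fun S' => F S' x)
          simp only [Pi.sub_apply, hc, ← hsplit]
          ring
        exact crux ▸ (ih.sub hEsum)
      · have hproc : proc μ S (i :: l) f = Eop μ i (proc μ S l f) := by simp [proc, hi]
        have hc : A.filter (fun S' => (i ∈ S' ↔ i ∈ S))
            = A.filter (fun S' => i ∉ S') :=
          Finset.filter_congr (by intro S' _; simp [hi])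
        rw [hproc, hfilter_eq, hc]
        exact hEsum
  have hfin : Finset.univ.filter
      (fun S' : Finset (Fin n) => ∀ j ∈ List.finRange n, (j ∈ S' ↔ j ∈ S)) = {S} := by
    ext S'
    simp only [Finset.mem_filter, Finset.mem_univ, true_and, Finset.mem_singleton]
    constructor
    · intro h
      exact Finset.ext fun j => h j (List.mem_finRange j)
    · rintro rfl j _
      exact Iff.rfl
  have hFS : F S =ᵐ[Measure.pi fun _ : Fin n => μ] proc μ S (List.finRange n) f := by
    have h1 := key (List.finRange n)
    rw [hfin] at h1
    have h2 : (fun x => ∑ S' ∈ ({S} : Finset (Finset (Fin n))), F S' x) = F S := by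
      funext x; simp
    rw [h2] at h1
    exact h1.symm
  rw [eLpNorm_congr_ae hFS]
  by_cases htop : eLpNorm f ⊤ (Measure.pi fun _ : Fin n => μ) = ⊤
  · rw [htop, ENNReal.mul_top (by positivity)]
    exact le_top
  · set C := (eLpNorm f ⊤ (Measure.pi fun _ : Fin n => μ)).toReal with hCdef
    have hC : ∀ᵐ x ∂(Measure.pi fun _ : Fin n => μ), ‖f x‖ ≤ C := by
      filter_upwards [ae_le_eLpNormEssSup (f := f) (μ := Measure.pi fun _ : Fin n => μ)]
        with x hx
      have h3 : ((‖f x‖₊ : ENNReal)).toReal ≤ C := by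
        apply ENNReal.toReal_mono htop
        rw [eLpNorm_exponent_top]; exact hx
      simpa using h3
    have hbound := proc_norm μ S (List.finRange n) hC
    have hlen : ((List.finRange n).filter (· ∈ S)).length = S.card := by
      rw [← List.toFinset_card_of_nodup ((List.nodup_finRange n).filter _),
        List.toFinset_filter, List.toFinset_finRange]
      simp [Finset.filter_univ_mem]
    rw [hlen] at hbound
    have h4 : eLpNorm (proc μ S (List.finRange n) f) ⊤ (Measure.pi fun _ : Fin n => μ)
        ≤ ENNReal.ofReal (2 ^ S.card * C) := by
      rw [eLpNorm_exponent_top]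
      exact eLpNormEssSup_le_of_ae_bound hbound
    refine h4.trans (le_of_eq ?_)
    rw [ENNReal.ofReal_mul (by positivity), ENNReal.ofReal_pow (by norm_num),
      ENNReal.ofReal_ofNat, ENNReal.ofReal_toReal htop]
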